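/- Let c, d > 2 and n = c + d. Consider the polynomial ring A = ℂ[T_{ij} : 1 ≤ i < j ≤ n] and the ring B = ℂ[S_{αβ}, S_κ, S_{γδ} : 1 ≤ α < β ≤ c, 1 ≤ κ ≤ n, c+1 ≤ γ < δ ≤ n]. Define the Segre-type homomorphism σ: A → B by σ(T_{ij}) = S_{ij} if j ≤ c, σ(T_{ij}) = S_i S_j if i ≤ c < j, and σ(T_{ij}) = S_{ij} if c+1 ≤ i. Then the kernel of σ is generated by the binomials g_{ijkl} := −T_{ik}T_{jl} + T_{il}T_{jk} for 1 ≤ i < j ≤ c < k < l ≤ n. -/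

import Mathlib

open MvPolynomial

/-- Index set for the Plücker variables `T_{ij}`, `i < j`. -/
abbrev PIdx (n : ℕ) := {p : Fin n × Fin n // p.1 < p.2}

/-- Index set for the variables of `B`: the variables `S_{αβ}` (`α < β ≤ c`) and
`S_{γδ}` (`c + 1 ≤ γ < δ`) are indexed by pairs lying entirely inside `{1,…,c}` or
entirely inside `{c+1,…,n}` (0-indexed: `p.2.val < c` or `c ≤ p.1.val`), and the
variables `S_κ` (`1 ≤ κ ≤ n`) are indexed by `Fin n`. -/
abbrev BVar (c n : ℕ) :=
  {p : PIdx n // p.val.2.val < c ∨ c ≤ p.val.1.val} ⊕ Fin n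

/-- The Segre-type homomorphism `σ : A → B`: `T_{ij} ↦ S_{ij}` if `j ≤ c`,
`T_{ij} ↦ S_iS_j` if `i ≤ c < j`, and `T_{ij} ↦ S_{ij}` if `c + 1 ≤ i`. -/
noncomputable def segre (c n : ℕ) :
    MvPolynomial (PIdx n) ℂ →ₐ[ℂ] MvPolynomial (BVar c n) ℂ :=
  aeval (fun p : PIdx n =>
    if h : p.val.2.val < c ∨ c ≤ p.val.1.val then X (Sum.inl ⟨p, h⟩)
    else X (Sum.inr p.val.1) * X (Sum.inr p.val.2))

/-- The variable `T_{ij}` in `A = ℂ[T_{ij}]`. -/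
noncomputable def Tv {n : ℕ} (i j : Fin n) (h : i < j) : MvPolynomial (PIdx n) ℂ :=
  X ⟨(i, j), h⟩

/-- The binomials `g_{ijkl} = -T_{ik}T_{jl} + T_{il}T_{jk}` for
`1 ≤ i < j ≤ c < k < l ≤ n` (0-indexed: `j.val < c ≤ k.val`). -/
def segreKerGens (c n : ℕ) : Set (MvPolynomial (PIdx n) ℂ) :=
  {P | ∃ (i j k l : Fin n) (hij : i < j) (hjk : j < k) (hkl : k < l),
    j.val < c ∧ c ≤ k.val ∧
    P = - Tv i k (hij.trans hjk) * Tv j l (hjk.trans hkl)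
          + Tv i l (hij.trans (hjk.trans hkl)) * Tv j k hjk}

namespace SegreAux

variable (c n : ℕ)

/-- The exponent vector of the image of a single variable under `segre`. -/
noncomputable def fB (p : PIdx n) : BVar c n →₀ ℕ :=
  if h : p.val.2.val < c ∨ c ≤ p.val.1.val then Finsupp.single (Sum.inl ⟨p, h⟩) 1
  else Finsupp.single (Sum.inr p.val.1) 1 + Finsupp.single (Sum.inr p.val.2) 1

/-- The induced map on exponent vectors. -/
noncomputable def psi (m : PIdx n →₀ ℕ) : BVar c n →₀ ℕ := m.sum fun p e => e • fB c n p

lemma psi_zero : psi c n 0 = 0 := Finsupp.sum_zero_index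

lemma psi_add (m₁ m₂ : PIdx n →₀ ℕ) : psi c n (m₁ + m₂) = psi c n m₁ + psi c n m₂ :=
  Finsupp.sum_add_index' (fun p => zero_smul ℕ (fB c n p)) (fun p e₁ e₂ => add_smul e₁ e₂ (fB c n p))

lemma psi_single (p : PIdx n) (e : ℕ) : psi c n (Finsupp.single p e) = e • fB c n p :=
  Finsupp.sum_single_index (zero_smul ℕ (fB c n p))

lemma segre_X (p : PIdx n) : segre c n (X p) = monomial (fB c n p) 1 := by
  rw [segre, aeval_X, fB]
  split_ifs with h
  · rfl
  · calc X (Sum.inr p.val.1) * X (Sum.inr p.val.2)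
        = monomial (Finsupp.single (Sum.inr p.val.1 : BVar c n) 1) (1:ℂ) *
            monomial (Finsupp.single (Sum.inr p.val.2) 1) 1 := rfl
      _ = _ := by rw [monomial_mul, one_mul]

lemma segre_monomial (m : PIdx n →₀ ℕ) :
    segre c n (monomial m 1) = monomial (psi c n m) 1 := by
  induction m using Finsupp.induction with
  | zero => simp [psi_zero]
  | single_add p e m hpm he ih =>
      have h1 : (monomial (Finsupp.single p e + m) (1:ℂ)) =
          monomial (Finsupp.single p e) 1 * monomial m 1 := by
        rw [monomial_mul, one_mul]
      rw [h1, map_mul, ih, psi_add, psi_single, ← X_pow_eq_monomial, map_pow, segre_X,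
        monomial_pow, one_pow, monomial_mul, one_mul]

lemma segre_monomial' (m : PIdx n →₀ ℕ) (a : ℂ) :
    segre c n (monomial m a) = monomial (psi c n m) a := by
  have : (monomial m a : MvPolynomial (PIdx n) ℂ) = C a * monomial m 1 := by
    rw [C_mul_monomial, mul_one]
  rw [this, map_mul, segre_monomial]
  simp only [algHom_C, algebraMap_eq, C_mul_monomial, mul_one]

lemma fB_apply_inl (q p : PIdx n) (h : p.val.2.val < c ∨ c ≤ p.val.1.val) :
    fB c n q (Sum.inl ⟨p, h⟩) = if q = p then 1 else 0 := by
  by_cases hqp : q = p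
  · subst hqp
    rw [if_pos rfl, fB, dif_pos h, Finsupp.single_apply, if_pos rfl]
  · rw [if_neg hqp, fB]
    split_ifs with h'
    · rw [Finsupp.single_apply,
        if_neg (fun hcon => hqp (congrArg Subtype.val (Sum.inl.inj hcon)))]
    · rw [Finsupp.add_apply, Finsupp.single_apply, Finsupp.single_apply]
      simp

lemma psi_apply_inl (m : PIdx n →₀ ℕ) (p : PIdx n) (h : p.val.2.val < c ∨ c ≤ p.val.1.val) :
    psi c n m (Sum.inl ⟨p, h⟩) = m p := by
  classical
  rw [psi, Finsupp.sum_apply]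
  simp only [Finsupp.smul_apply, fB_apply_inl, smul_eq_mul, mul_ite, mul_one, mul_zero]
  rw [Finsupp.sum_ite_eq']
  split_ifs with hs
  · rfl
  · exact (Finsupp.notMem_support_iff.mp hs).symm

lemma psi_inr_pos (m : PIdx n →₀ ℕ) (p : PIdx n) (hp : p ∈ m.support)
    (hc : ¬(p.val.2.val < c ∨ c ≤ p.val.1.val)) (a : Fin n)
    (ha : p.val.1 = a ∨ p.val.2 = a) :
    psi c n m (Sum.inr a) ≠ 0 := by
  classical
  rw [psi, Finsupp.sum_apply, Finsupp.sum]
  intro h0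
  have hterm := Finset.sum_eq_zero_iff.mp h0 p hp
  rw [Finsupp.smul_apply, smul_eq_mul, fB, dif_neg hc] at hterm
  have hmp : m p ≠ 0 := Finsupp.mem_support_iff.mp hp
  rcases Nat.mul_eq_zero.mp hterm with h1 | h1
  · exact hmp h1
  · rw [Finsupp.add_apply, Finsupp.single_apply, Finsupp.single_apply] at h1
    rcases ha with ha | ha <;> simp [ha] at h1

lemma psi_inr_exists (m : PIdx n →₀ ℕ) (a : Fin n) (h : psi c n m (Sum.inr a) ≠ 0) :
    ∃ q ∈ m.support, ¬(q.val.2.val < c ∨ c ≤ q.val.1.val) ∧ (q.val.1 = a ∨ q.val.2 = a) := by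
  classical
  rw [psi, Finsupp.sum_apply, Finsupp.sum] at h
  obtain ⟨q, hq, hq0⟩ := Finset.exists_ne_zero_of_sum_ne_zero h
  refine ⟨q, hq, ?_⟩
  rw [Finsupp.smul_apply, smul_eq_mul, fB] at hq0
  split_ifs at hq0 with h'
  · simp at hq0
  · refine ⟨h', ?_⟩
    by_contra hcon
    push_neg at hcon
    simp [Finsupp.single_apply, hcon.1, hcon.2] at hq0

lemma psi_eq_zero (m : PIdx n →₀ ℕ) (h : psi c n m = 0) : m = 0 := by
  by_contra hm
  obtain ⟨p, hp⟩ := Finsupp.support_nonempty_iff.mpr hm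
  by_cases hc : p.val.2.val < c ∨ c ≤ p.val.1.val
  · have := psi_apply_inl c n m p hc
    rw [h] at this
    exact Finsupp.mem_support_iff.mp hp this.symm
  · exact psi_inr_pos c n m p hp hc p.val.1 (Or.inl rfl) (by rw [h]; rfl)

lemma swap_mem (i j k l : Fin n) (hic : i.val < c) (hjc : j.val < c)
    (hck : c ≤ k.val) (hcl : c ≤ l.val) (hij : i ≠ j) (hkl : k ≠ l) :
    (Tv i k (Fin.lt_def.mpr (lt_of_lt_of_le hic hck)) *
        Tv j l (Fin.lt_def.mpr (lt_of_lt_of_le hjc hcl)) -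
      Tv i l (Fin.lt_def.mpr (lt_of_lt_of_le hic hcl)) *
        Tv j k (Fin.lt_def.mpr (lt_of_lt_of_le hjc hck)))
      ∈ Ideal.span (segreKerGens c n) := by
  rcases lt_or_gt_of_ne hij with h | h <;> rcases lt_or_gt_of_ne hkl with h' | h'
  · have hg := Ideal.subset_span (show _ ∈ segreKerGens c n from
      ⟨i, j, k, l, h, Fin.lt_def.mpr (lt_of_lt_of_le hjc hck), h', hjc, hck, rfl⟩)
    convert neg_mem hg using 1
    simp only [Tv]; ring
  · have hg := Ideal.subset_span (show _ ∈ segreKerGens c n from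
      ⟨i, j, l, k, h, Fin.lt_def.mpr (lt_of_lt_of_le hjc hcl), h', hjc, hcl, rfl⟩)
    convert SetLike.mem_coe.mp hg using 1
    simp only [Tv]; ring
  · have hg := Ideal.subset_span (show _ ∈ segreKerGens c n from
      ⟨j, i, k, l, h, Fin.lt_def.mpr (lt_of_lt_of_le hic hck), h', hic, hck, rfl⟩)
    convert SetLike.mem_coe.mp hg using 1
    simp only [Tv]; ring
  · have hg := Ideal.subset_span (show _ ∈ segreKerGens c n from
      ⟨j, i, l, k, h, Fin.lt_def.mpr (lt_of_lt_of_le hic hcl), h', hic, hcl, rfl⟩)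
    convert neg_mem hg using 1
    simp only [Tv]; ring

lemma sub_single_add (m : PIdx n →₀ ℕ) (p : PIdx n) (hp : p ∈ m.support) :
    (m - Finsupp.single p 1) + Finsupp.single p 1 = m := by
  have h1 : 1 ≤ m p := Nat.one_le_iff_ne_zero.mpr (Finsupp.mem_support_iff.mp hp)
  ext a
  rw [Finsupp.add_apply, Finsupp.tsub_apply, Finsupp.single_apply]
  split_ifs with hpa
  · subst hpa; omega
  · omega

lemma deg_add (m₁ m₂ : PIdx n →₀ ℕ) :
    ((m₁ + m₂).sum fun _ e => e) = (m₁.sum fun _ e => e) + (m₂.sum fun _ e => e) :=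
  Finsupp.sum_add_index' (fun _ => rfl) (fun _ _ _ => rfl)

lemma deg_single (p : PIdx n) (e : ℕ) : ((Finsupp.single p e).sum fun _ e => e) = e :=
  Finsupp.sum_single_index rfl

lemma monomial_split (m₀ : PIdx n →₀ ℕ) (p : PIdx n) :
    (monomial (m₀ + Finsupp.single p 1) (1:ℂ) : MvPolynomial (PIdx n) ℂ)
      = X p * monomial m₀ 1 := by
  rw [show (X p : MvPolynomial (PIdx n) ℂ) = monomial (Finsupp.single p 1) 1 from rfl,
    monomial_mul, one_mul, add_comm]

lemma strip_step (N : ℕ)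
    (ih : ∀ a b : PIdx n →₀ ℕ, (a.sum fun _ e => e) ≤ N → psi c n a = psi c n b →
      (monomial a 1 - monomial b 1 : MvPolynomial (PIdx n) ℂ) ∈ Ideal.span (segreKerGens c n))
    (m m' : PIdx n →₀ ℕ) (p : PIdx n) (hp : p ∈ m.support) (hp' : p ∈ m'.support)
    (hψ : psi c n m = psi c n m') (hd : (m.sum fun _ e => e) ≤ N + 1) :
    (monomial m 1 - monomial m' 1 : MvPolynomial (PIdx n) ℂ)
      ∈ Ideal.span (segreKerGens c n) := by
  set m₁ := m - Finsupp.single p 1 with hm₁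
  set m₁' := m' - Finsupp.single p 1 with hm₁'
  have e1 : m₁ + Finsupp.single p 1 = m := sub_single_add n m p hp
  have e1' : m₁' + Finsupp.single p 1 = m' := sub_single_add n m' p hp'
  have hψ₁ : psi c n m₁ = psi c n m₁' := by
    have h2 : psi c n m₁ + psi c n (Finsupp.single p 1)
        = psi c n m₁' + psi c n (Finsupp.single p 1) := by
      rw [← psi_add, ← psi_add, e1, e1', hψ]
    exact add_right_cancel h2
  have hdeg : (m₁.sum fun _ e => e) ≤ N := by
    have hda := deg_add n m₁ (Finsupp.single p 1)
    rw [e1, deg_single] at hda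
    omega
  have hmem := ih m₁ m₁' hdeg hψ₁
  have heq : (monomial m 1 - monomial m' 1 : MvPolynomial (PIdx n) ℂ)
      = X p * (monomial m₁ 1 - monomial m₁' 1) := by
    rw [mul_sub, ← monomial_split, ← monomial_split, e1, e1']
  rw [heq]
  exact Ideal.mul_mem_left _ _ hmem

lemma key (N : ℕ) : ∀ m m' : PIdx n →₀ ℕ, (m.sum fun _ e => e) ≤ N →
    psi c n m = psi c n m' →
    (monomial m 1 - monomial m' 1 : MvPolynomial (PIdx n) ℂ)
      ∈ Ideal.span (segreKerGens c n) := by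
  induction N with
  | zero =>
    intro m m' hd hψ
    have hm : m = 0 := by
      ext a
      by_contra ha
      exact ha (Finset.sum_eq_zero_iff.mp (Nat.le_zero.mp hd) a (Finsupp.mem_support_iff.mpr ha))
    subst hm
    have hm' : m' = 0 := psi_eq_zero c n m' (by rw [← hψ, psi_zero])
    rw [hm', sub_self]
    exact zero_mem _
  | succ N ih =>
    intro m m' hd hψ
    by_cases hm0 : m = 0
    · subst hm0
      have hm' : m' = 0 := psi_eq_zero c n m' (by rw [← hψ, psi_zero])
      rw [hm', sub_self]
      exact zero_mem _
    obtain ⟨p, hp⟩ := Finsupp.support_nonempty_iff.mpr hm0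
    by_cases hcond : p.val.2.val < c ∨ c ≤ p.val.1.val
    · have hp' : p ∈ m'.support := by
        rw [Finsupp.mem_support_iff, ← psi_apply_inl c n m' p hcond, ← hψ,
          psi_apply_inl]
        exact Finsupp.mem_support_iff.mp hp
      exact strip_step c n N ih m m' p hp hp' hψ hd
    · -- p is a mixed variable
      have hpos : psi c n m' (Sum.inr p.val.1) ≠ 0 := by
        rw [← hψ]; exact psi_inr_pos c n m p hp hcond p.val.1 (Or.inl rfl)
      obtain ⟨q, hq, hqcond, hqa⟩ := psi_inr_exists c n m' p.val.1 hpos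
      have hq1 : q.val.1 = p.val.1 := by
        rcases hqa with h1 | h1
        · exact h1
        · exfalso
          have h2 := congrArg Fin.val h1
          omega
      by_cases hqm : q ∈ m.support
      · exact strip_step c n N ih m m' q hqm hq hψ hd
      · -- swap case
        have hpos2 : psi c n m (Sum.inr q.val.2) ≠ 0 := by
          rw [hψ]; exact psi_inr_pos c n m' q hq hqcond q.val.2 (Or.inr rfl)
        obtain ⟨p₂, hp₂, hp₂cond, hp₂a⟩ := psi_inr_exists c n m q.val.2 hpos2
        have hp₂2 : p₂.val.2 = q.val.2 := by
          rcases hp₂a with h1 | h1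
          · exfalso
            have h2 := congrArg Fin.val h1
            omega
          · exact h1
        have hne_col : p.val.2 ≠ q.val.2 := by
          intro h
          apply hqm
          have hqp : q = p := Subtype.ext (by rw [show q.val = (q.val.1, q.val.2) from rfl, hq1, ← h])
          rw [hqp]; exact hp
        have hne_row : p₂.val.1 ≠ p.val.1 := by
          intro h
          apply hqm
          have hqp₂ : p₂ = q := Subtype.ext
            (by rw [show p₂.val = (p₂.val.1, p₂.val.2) from rfl, h, hp₂2, ← hq1])
          rw [← hqp₂]; exact hp₂
        have hne : p₂ ≠ p := by
          intro h
          exact hne_col (by rw [← h, hp₂2])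
        -- the swapped pair (j, k) = (p₂.1, p.2)
        have hrlt : (p₂.val.1, p.val.2).1 < (p₂.val.1, p.val.2).2 := by
          show p₂.val.1 < p.val.2
          exact Fin.lt_def.mpr (by omega)
        set r : PIdx n := ⟨(p₂.val.1, p.val.2), hrlt⟩ with hr
        have hrcond : ¬(r.val.2.val < c ∨ c ≤ r.val.1.val) := by
          show ¬((p.val.2).val < c ∨ c ≤ (p₂.val.1).val)
          omega
        set rest := m - Finsupp.single p 1 - Finsupp.single p₂ 1 with hrest
        have h1p : 1 ≤ m p := Nat.one_le_iff_ne_zero.mpr (Finsupp.mem_support_iff.mp hp)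
        have h1p₂ : 1 ≤ m p₂ := Nat.one_le_iff_ne_zero.mpr (Finsupp.mem_support_iff.mp hp₂)
        have e2 : rest + Finsupp.single p 1 + Finsupp.single p₂ 1 = m := by
          ext a
          rw [Finsupp.add_apply, Finsupp.add_apply, hrest, Finsupp.tsub_apply,
            Finsupp.tsub_apply, Finsupp.single_apply, Finsupp.single_apply]
          split_ifs with hw1 hw2 hw3
          · exact absurd (hw2.trans hw1.symm) hne
          · subst hw1; omega
          · subst hw3; omega
          · omega
        set m₂ := rest + Finsupp.single q 1 + Finsupp.single r 1 with hm₂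
        have hfB : fB c n q + fB c n r = fB c n p + fB c n p₂ := by
          rw [fB, fB, fB, fB, dif_neg hqcond, dif_neg hrcond, dif_neg hcond,
            dif_neg hp₂cond, hq1, hp₂2]
          rw [show r.val.1 = p₂.val.1 from rfl, show r.val.2 = p.val.2 from rfl]
          abel
        have hψ₂ : psi c n m₂ = psi c n m := by
          rw [hm₂, ← e2, psi_add, psi_add, psi_add, psi_add, psi_single, psi_single,
            psi_single, psi_single, one_smul, one_smul, one_smul, one_smul,
            add_assoc, add_assoc, hfB]
        have hq₂ : q ∈ m₂.support := by
          rw [Finsupp.mem_support_iff, hm₂, Finsupp.add_apply, Finsupp.add_apply,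
            Finsupp.single_apply, if_pos rfl]
          omega
        -- step 1 : swap within m
        have hic : p.val.1.val < c := by omega
        have hjc : p₂.val.1.val < c := by omega
        have hck : c ≤ p.val.2.val := by omega
        have hcl : c ≤ p₂.val.2.val := by omega
        have hxq : (⟨(p.val.1, p₂.val.2),
            Fin.lt_def.mpr (lt_of_lt_of_le hic hcl)⟩ : PIdx n) = q := by
          apply Subtype.ext
          show (p.val.1, p₂.val.2) = q.val
          rw [hp₂2, ← hq1]
        have hswap := swap_mem c n p.val.1 p₂.val.1 p.val.2 p₂.val.2 hic hjc hck hcl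
          (fun h => hne_row h.symm) (fun h => hne_col (h.trans hp₂2))
        have hmeq : (monomial m 1 : MvPolynomial (PIdx n) ℂ)
            = X p₂ * (X p * monomial rest 1) := by
          rw [← e2, monomial_split, monomial_split]
        have hm2eq : (monomial m₂ 1 : MvPolynomial (PIdx n) ℂ)
            = X r * (X q * monomial rest 1) := by
          rw [hm₂, monomial_split, monomial_split]
        have hstep1 : (monomial m 1 - monomial m₂ 1 : MvPolynomial (PIdx n) ℂ)
            ∈ Ideal.span (segreKerGens c n) := by
          rw [hmeq, hm2eq]
          have heq2 : (X p₂ * (X p * monomial rest 1) - X r * (X q * monomial rest 1)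
              : MvPolynomial (PIdx n) ℂ)
              = (Tv p.val.1 p.val.2 (Fin.lt_def.mpr (lt_of_lt_of_le hic hck)) *
                  Tv p₂.val.1 p₂.val.2 (Fin.lt_def.mpr (lt_of_lt_of_le hjc hcl)) -
                Tv p.val.1 p₂.val.2 (Fin.lt_def.mpr (lt_of_lt_of_le hic hcl)) *
                  Tv p₂.val.1 p.val.2 (Fin.lt_def.mpr (lt_of_lt_of_le hjc hck)))
                * monomial rest 1 := by
            rw [Tv, Tv, Tv, Tv, hxq]
            ring
          rw [heq2]
          exact Ideal.mul_mem_right _ _ hswap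
        -- step 2 : strip q from m₂ and m'
        have hψ₂' : psi c n m₂ = psi c n m' := hψ₂.trans hψ
        have hdeg₂ : (m₂.sum fun _ e => e) ≤ N + 1 := by
          have hda1 := deg_add n (rest + Finsupp.single p 1) (Finsupp.single p₂ 1)
          have hda2 := deg_add n rest (Finsupp.single p 1)
          have hda3 := deg_add n (rest + Finsupp.single q 1) (Finsupp.single r 1)
          have hda4 := deg_add n rest (Finsupp.single q 1)
          rw [e2, deg_single] at hda1
          rw [deg_single] at hda2
          rw [← hm₂, deg_single] at hda3
          rw [deg_single] at hda4
          omega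
        have hstep2 := strip_step c n N ih m₂ m' q hq₂ hq hψ₂' hdeg₂
        have hfin : (monomial m 1 - monomial m' 1 : MvPolynomial (PIdx n) ℂ)
            = (monomial m 1 - monomial m₂ 1) + (monomial m₂ 1 - monomial m' 1) := by
          ring
        rw [hfin]
        exact add_mem hstep1 hstep2

lemma ker_le (N : ℕ) : ∀ P : MvPolynomial (PIdx n) ℂ, P.support.card ≤ N →
    segre c n P = 0 → P ∈ Ideal.span (segreKerGens c n) := by
  classical
  induction N with
  | zero =>
    intro P hP _
    have : P = 0 := support_eq_empty.mp (Finset.card_eq_zero.mp (Nat.le_zero.mp hP))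
    rw [this]; exact zero_mem _
  | succ N ih =>
    intro P hP h0
    by_cases hP0 : P = 0
    · rw [hP0]; exact zero_mem _
    obtain ⟨m, hm⟩ := support_nonempty.mpr hP0
    have hcoeff : ∑ m'' ∈ P.support,
        (if psi c n m'' = psi c n m then coeff m'' P else 0) = 0 := by
      have h1 : coeff (psi c n m) (segre c n P) = 0 := by rw [h0]; rfl
      rw [show segre c n P = ∑ m'' ∈ P.support, monomial (psi c n m'') (coeff m'' P) by
          conv_lhs => rw [as_sum P]
          rw [map_sum]
          exact Finset.sum_congr rfl fun m'' _ => segre_monomial' c n m'' (coeff m'' P)]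
        at h1
      have h2 : coeff (psi c n m)
          (∑ m'' ∈ P.support, monomial (psi c n m'') (coeff m'' P))
          = ∑ m'' ∈ P.support, (if psi c n m'' = psi c n m then coeff m'' P else 0) := by
        rw [coeff_sum]
        exact Finset.sum_congr rfl fun m'' _ => coeff_monomial _ _ _
      rw [h2] at h1
      exact h1
    obtain ⟨m', hm'supp, hm'ne, hm'ψ⟩ :
        ∃ m' ∈ P.support, m' ≠ m ∧ psi c n m' = psi c n m := by
      by_contra hcon
      push_neg at hcon
      have : ∑ m'' ∈ P.support,
          (if psi c n m'' = psi c n m then coeff m'' P else 0) = coeff m P := by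
        rw [Finset.sum_eq_single_of_mem m hm
          (fun m'' hmem hne => if_neg (hcon m'' hmem hne)), if_pos rfl]
      rw [this] at hcoeff
      exact mem_support_iff.mp hm hcoeff
    set a := coeff m' P with ha
    set Q := P - monomial m' a + monomial m a with hQ
    have hQP : Q - P ∈ Ideal.span (segreKerGens c n) := by
      have : Q - P = C a * (monomial m 1 - monomial m' 1) := by
        rw [hQ, mul_sub, C_mul_monomial, C_mul_monomial, mul_one]
        ring
      rw [this]
      exact Ideal.mul_mem_left _ _
        (key c n ((m.sum fun _ e => e) + 1) m m' (by omega) hm'ψ.symm)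
    have hQ0 : segre c n Q = 0 := by
      rw [hQ, map_add, map_sub, segre_monomial', segre_monomial', hm'ψ, h0]
      ring
    have hQsupp : Q.support ⊆ P.support.erase m' := by
      intro b hb
      rw [Finset.mem_erase]
      have hbQ := mem_support_iff.mp hb
      constructor
      · intro hbm'
        apply hbQ
        rw [hbm', hQ, coeff_add, coeff_sub, coeff_monomial, coeff_monomial,
          if_pos rfl, if_neg (fun h => hm'ne h.symm), ha]
        ring
      · by_contra hbP
        apply hbQ
        have hbm : b ≠ m := fun h => hbP (h ▸ hm)
        have hbm' : b ≠ m' := fun h => hbP (h ▸ hm'supp)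
        rw [hQ, coeff_add, coeff_sub, coeff_monomial, coeff_monomial,
          if_neg (fun h => hbm' h.symm), if_neg (fun h => hbm h.symm),
          notMem_support_iff.mp hbP]
        ring
    have hcard : Q.support.card ≤ N := by
      have h1 := Finset.card_le_card hQsupp
      have h2 : (P.support.erase m').card = P.support.card - 1 :=
        Finset.card_erase_of_mem hm'supp
      have h3 : 1 ≤ P.support.card := Finset.card_pos.mpr ⟨m, hm⟩
      omega
    have hQmem := ih Q hcard hQ0
    have : P = Q - (Q - P) := by ring
    rw [this]
    exact sub_mem hQmem hQP

lemma span_le_ker :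
    Ideal.span (segreKerGens c n) ≤ RingHom.ker (segre c n).toRingHom := by
  rw [Ideal.span_le]
  rintro g ⟨i, j, k, l, hij, hjk, hkl, hjc, hck, rfl⟩
  have hic : i.val < c := lt_trans (Fin.lt_def.mp hij) hjc
  have hcl : c ≤ l.val := le_trans hck (le_of_lt (Fin.lt_def.mp hkl))
  have hx : ∀ (x y : Fin n) (hxy : x < y), x.val < c → c ≤ y.val →
      segre c n (Tv x y hxy) = X (Sum.inr x) * X (Sum.inr y) := by
    intro x y hxy h1 h2
    rw [Tv, segre, aeval_X, dif_neg (by show ¬(y.val < c ∨ c ≤ x.val); omega)]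
  rw [SetLike.mem_coe, RingHom.mem_ker]
  rw [show ((segre c n).toRingHom : MvPolynomial (PIdx n) ℂ →+* _)
      = (segre c n : MvPolynomial (PIdx n) ℂ →+* _) from rfl]
  show segre c n _ = 0
  rw [map_add, neg_mul, map_neg, map_mul, map_mul, hx i k _ hic hck,
    hx j l _ (by omega) (by omega), hx i l _ hic (by omega), hx j k _ (by omega) hck]
  ring

end SegreAux

/-- For `c, d > 2` and `n = c + d`, the kernel of the Segre-type map `σ : A → B` is
generated by the binomials `g_{ijkl} = -T_{ik}T_{jl} + T_{il}T_{jk}` for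
`i < j ≤ c < k < l`. -/
theorem stmt_5 (c d : ℕ) (hc : 2 < c) (hd : 2 < d) :
    RingHom.ker (segre c (c + d)).toRingHom =
      Ideal.span (segreKerGens c (c + d)) := by
  apply le_antisymm
  · intro P hP
    exact SegreAux.ker_le c (c + d) P.support.card P le_rfl
      (by rwa [RingHom.mem_ker] at hP)
  · exact SegreAux.span_le_ker c (c + d)
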